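/- Suppose η: ℝⁿ → ℝⁿ satisfies zᵀη(z) ≥ zᵀΥz for all z with ‖z‖₂ ≤ e_max, where Υ = diag(υ₁,…,υₙ) with υᵢ ≥ 0 and Σᵢ υᵢ > 0. Then for a connected graph with weights a_ij and stack error vector e with blocks eᵢ satisfying Σᵢeᵢ = 0 and ‖eᵢ − eⱼ‖₂ ≤ e_max for all i,j, one has ½ Σᵢ Σⱼ a_ij (eᵢ − eⱼ)ᵀ η(eᵢ − eⱼ) ≥ eᵀ(L ⊗ Υ)e ≥ λ₂(L ⊗ Υ_r ⊕ 0) ‖ẽ_r‖₂², where ẽ_r collects the components of e corresponding to positive υᵢ. -/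

import Mathlib

open Matrix Finset Kronecker

section AuxStmt12

lemma sum_reduce_stmt12 {n r : ℕ} (hr : r ≤ n) (f : Fin n → ℝ)
    (h0 : ∀ k : Fin n, r ≤ (k : ℕ) → f k = 0) :
    ∑ k, f k = ∑ k : Fin r, f (Fin.castLE hr k) := by
  classical
  have hinj : ∀ x ∈ (univ : Finset (Fin r)), ∀ y ∈ univ,
      Fin.castLE hr x = Fin.castLE hr y → x = y := by
    intro x _ y _ h
    exact Fin.val_injective (by simpa using congrArg Fin.val h)
  have himg : ∑ x ∈ (univ : Finset (Fin r)).image (Fin.castLE hr), f x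
      = ∑ k : Fin r, f (Fin.castLE hr k) := Finset.sum_image hinj
  rw [← himg]
  refine (Finset.sum_subset (Finset.subset_univ _) ?_).symm
  intro k _ hk
  apply h0
  by_contra h
  push_neg at h
  exact hk (Finset.mem_image.2 ⟨⟨k, h⟩, Finset.mem_univ _, Fin.ext rfl⟩)

lemma lap_quad_stmt12 {N : ℕ} {ι : Type*} [Fintype ι] (a : Fin N → Fin N → ℝ)
    (hsym : ∀ i j, a i j = a j i)
    (L : Matrix (Fin N) (Fin N) ℝ)
    (hL : ∀ i j, L i j = if i = j then ∑ k ∈ univ.erase i, a i k else -a i j)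
    (d : ι → ℝ) (z : Fin N → ι → ℝ) :
    ∑ i, ∑ j, L i j * ∑ k, d k * z i k * z j k
      = (1/2 : ℝ) * ∑ i, ∑ j, a i j * ∑ k, d k * (z i k - z j k)^2 := by
  classical
  set q : Fin N → Fin N → ℝ := fun i j => ∑ k, d k * z i k * z j k with hq
  have hexp : ∀ i j, ∑ k, d k * (z i k - z j k)^2 = q i i - 2 * q i j + q j j := by
    intro i j
    have : ∀ k ∈ (univ : Finset ι), d k * (z i k - z j k)^2 =
        d k * z i k * z i k - 2 * (d k * z i k * z j k) + d k * z j k * z j k := by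
      intros; ring
    rw [Finset.sum_congr rfl this, Finset.sum_add_distrib, Finset.sum_sub_distrib,
      ← Finset.mul_sum]
  have hLHS : ∀ i, ∑ j, L i j * q i j = ∑ j, (a i j * q i i - a i j * q i j) := by
    intro i
    rw [← Finset.add_sum_erase _ _ (Finset.mem_univ i),
        ← Finset.add_sum_erase _ (fun j => a i j * q i i - a i j * q i j) (Finset.mem_univ i),
        show a i i * q i i - a i i * q i i = 0 from by ring, zero_add,
        hL i i, if_pos rfl, Finset.sum_mul, Finset.sum_sub_distrib]
    have h2 : ∑ x ∈ univ.erase i, L i x * q i x = - ∑ x ∈ univ.erase i, a i x * q i x := by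
      rw [← Finset.sum_neg_distrib]
      apply Finset.sum_congr rfl
      intro j hj
      rw [hL i j, if_neg (Finset.ne_of_mem_erase hj).symm]; ring
    rw [h2]; ring
  have hswap : ∑ i, ∑ j, a i j * q j j = ∑ i, ∑ j, a i j * q i i := by
    rw [Finset.sum_comm]
    apply Finset.sum_congr rfl; intro i _
    apply Finset.sum_congr rfl; intro j _
    rw [hsym j i]
  have hd : ∑ i, ∑ j, a i j * (q i i - 2 * q i j + q j j)
      = (∑ i, ∑ j, a i j * q i i) - 2 * (∑ i, ∑ j, a i j * q i j)
        + (∑ i, ∑ j, a i j * q j j) := by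
    have : ∀ i ∈ (univ : Finset (Fin N)),
        ∑ j, a i j * (q i i - 2 * q i j + q j j)
          = (∑ j, a i j * q i i) - 2 * (∑ j, a i j * q i j) + (∑ j, a i j * q j j) := by
      intro i _
      rw [Finset.mul_sum, ← Finset.sum_sub_distrib, ← Finset.sum_add_distrib]
      apply Finset.sum_congr rfl; intros; ring
    rw [Finset.sum_congr rfl this, Finset.mul_sum, ← Finset.sum_sub_distrib,
      ← Finset.sum_add_distrib]
  calc ∑ i, ∑ j, L i j * q i j = ∑ i, ∑ j, (a i j * q i i - a i j * q i j) := by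
        exact Finset.sum_congr rfl fun i _ => hLHS i
    _ = (1/2 : ℝ) * ∑ i, ∑ j, a i j * (q i i - 2 * q i j + q j j) := by
        rw [hd, hswap]
        simp only [Finset.sum_sub_distrib]
        ring
    _ = (1/2 : ℝ) * ∑ i, ∑ j, a i j * ∑ k, d k * (z i k - z j k)^2 := by
        congr 1
        apply Finset.sum_congr rfl; intro i _
        apply Finset.sum_congr rfl; intro j _
        rw [hexp]

lemma ker_const_stmt12 {N : ℕ} {ι : Type*} [Fintype ι] (a : Fin N → Fin N → ℝ)
    (hnonneg : ∀ i j, 0 ≤ a i j)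
    (G : SimpleGraph (Fin N)) (hadj : ∀ i j, G.Adj i j ↔ i ≠ j ∧ 0 < a i j)
    (hconn : G.Connected)
    (d : ι → ℝ) (hd : ∀ k, 0 < d k)
    (z : Fin N → ι → ℝ)
    (hz : ∑ i, ∑ j, a i j * ∑ k, d k * (z i k - z j k)^2 = 0) :
    ∀ i j, z i = z j := by
  classical
  have hnn : ∀ i j, 0 ≤ a i j * ∑ k, d k * (z i k - z j k)^2 := fun i j =>
    mul_nonneg (hnonneg i j) (Finset.sum_nonneg fun k _ => mul_nonneg (hd k).le (sq_nonneg _))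
  have hzero : ∀ i j, a i j * ∑ k, d k * (z i k - z j k)^2 = 0 := by
    intro i j
    have h1 := (Finset.sum_eq_zero_iff_of_nonneg
      (fun i _ => Finset.sum_nonneg fun j _ => hnn i j)).1 hz i (Finset.mem_univ i)
    exact (Finset.sum_eq_zero_iff_of_nonneg (fun j _ => hnn i j)).1 h1 j (Finset.mem_univ j)
  have hstep : ∀ i j, G.Adj i j → z i = z j := by
    intro i j hij
    obtain ⟨-, hpos⟩ := (hadj i j).1 hij
    have hsumz : ∑ k, d k * (z i k - z j k)^2 = 0 := by
      rcases mul_eq_zero.1 (hzero i j) with h | h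
      · exact absurd h hpos.ne'
      · exact h
    funext k
    have h1 := (Finset.sum_eq_zero_iff_of_nonneg
      (fun k _ => mul_nonneg (hd k).le (sq_nonneg _))).1 hsumz k (Finset.mem_univ k)
    have h2 : (z i k - z j k)^2 = 0 := by
      rcases mul_eq_zero.1 h1 with h | h
      · exact absurd h (hd k).ne'
      · exact h
    have := sq_eq_zero_iff.1 h2
    linarith
  have key : ∀ i j, G.Reachable i j → z i = z j := by
    intro i j h
    obtain ⟨w⟩ := h
    induction w with
    | nil => rfl
    | cons h p ih => exact (hstep _ _ h).trans ih
  exact fun i j => key i j (hconn.preconnected i j)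

lemma kron_quad_stmt12 {N r : ℕ} (L : Matrix (Fin N) (Fin N) ℝ) (d : Fin r → ℝ)
    (z : Fin N × Fin r → ℝ) :
    z ⬝ᵥ ((L ⊗ₖ Matrix.diagonal d) *ᵥ z)
      = ∑ i, ∑ j, L i j * ∑ k, d k * z (i, k) * z (j, k) := by
  classical
  simp only [dotProduct, mulVec, Fintype.sum_prod_type, kroneckerMap_apply, diagonal_apply,
    mul_ite, ite_mul, mul_zero, zero_mul, Finset.sum_ite_eq, Finset.mem_univ, if_true]
  simp only [Finset.mul_sum]
  apply Finset.sum_congr rfl; intro i _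
  rw [Finset.sum_comm]
  apply Finset.sum_congr rfl; intro j _
  apply Finset.sum_congr rfl; intro k _
  ring

lemma kron_herm_stmt12 {N r : ℕ} (L : Matrix (Fin N) (Fin N) ℝ) (hLsym : Lᵀ = L)
    (d : Fin r → ℝ) : (L ⊗ₖ Matrix.diagonal d).IsHermitian := by
  rw [Matrix.IsHermitian, conjTranspose_eq_transpose_of_trivial]
  ext ⟨i, k⟩ ⟨j, l⟩
  simp only [transpose_apply, kroneckerMap_apply]
  rw [show L j i = L i j from congrFun (congrFun hLsym i) j]
  congr 1
  by_cases h : k = l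
  · subst h; rfl
  · rw [Matrix.diagonal_apply_ne' _ h, Matrix.diagonal_apply_ne _ h]

end AuxStmt12

theorem stmt12 (N n r : ℕ) (hN : 1 ≤ N) (hr : r ≤ n)
    (η : (Fin n → ℝ) → (Fin n → ℝ))
    (υ : Fin n → ℝ) (hυpos : ∀ k : Fin n, (k : ℕ) < r → 0 < υ k)
    (hυ0 : ∀ k : Fin n, r ≤ (k : ℕ) → υ k = 0)
    (emax : ℝ) (hemax : 0 < emax)
    (hsector : ∀ z : Fin n → ℝ, Real.sqrt (∑ k, (z k) ^ 2) ≤ emax →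
      z ⬝ᵥ η z ≥ ∑ k, υ k * (z k) ^ 2)
    (a : Fin N → Fin N → ℝ) (hsym : ∀ i j, a i j = a j i) (hnonneg : ∀ i j, 0 ≤ a i j)
    (G : SimpleGraph (Fin N)) (hadj : ∀ i j, G.Adj i j ↔ i ≠ j ∧ 0 < a i j)
    (hconn : G.Connected)
    (L : Matrix (Fin N) (Fin N) ℝ)
    (hL : ∀ i j, L i j = if i = j then ∑ k ∈ univ.erase i, a i k else -a i j)
    (lam₂ : ℝ)
    (hlam₂ : IsLeast {μ : ℝ | μ ≠ 0 ∧ ∃ z : Fin N × Fin r → ℝ, z ≠ 0 ∧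
      (L ⊗ₖ Matrix.diagonal (fun k : Fin r => υ (Fin.castLE hr k))) *ᵥ z = μ • z} lam₂)
    (e : Fin N → Fin n → ℝ) (hsum : ∑ i, e i = 0)
    (hediff : ∀ i j, Real.sqrt (∑ k, (e i k - e j k) ^ 2) ≤ emax) :
    ((1 / 2 : ℝ) * ∑ i, ∑ j, a i j * ((e i - e j) ⬝ᵥ η (e i - e j)) ≥
      ∑ i, ∑ j, L i j * ∑ k, υ k * e i k * e j k) ∧
    (∑ i, ∑ j, L i j * ∑ k, υ k * e i k * e j k ≥
      lam₂ * ∑ i, ∑ k : Fin r, (e i (Fin.castLE hr k)) ^ 2) := by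
  classical
  have hLsym : Lᵀ = L := by
    ext i j
    show L j i = L i j
    by_cases h : i = j
    · subst h; rfl
    · rw [hL i j, hL j i, if_neg h, if_neg (Ne.symm h), hsym]
  set υ' : Fin r → ℝ := fun k => υ (Fin.castLE hr k) with hυ'def
  have hυ'pos : ∀ k, 0 < υ' k := fun k => hυpos _ (by simpa using k.2)
  set M := L ⊗ₖ Matrix.diagonal υ' with hMdef
  have hmid : ∀ i j : Fin N, ∑ k : Fin n, υ k * e i k * e j k
      = ∑ k : Fin r, υ' k * e i (Fin.castLE hr k) * e j (Fin.castLE hr k) := by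
    intro i j
    exact sum_reduce_stmt12 hr (fun k => υ k * e i k * e j k)
      (fun k hk => by show υ k * e i k * e j k = 0; rw [hυ0 k hk]; ring)
  constructor
  · -- Part 1
    rw [lap_quad_stmt12 a hsym L hL υ e, ge_iff_le]
    apply mul_le_mul_of_nonneg_left ?_ (by norm_num : (0:ℝ) ≤ 1/2)
    apply Finset.sum_le_sum; intro i _
    apply Finset.sum_le_sum; intro j _
    apply mul_le_mul_of_nonneg_left ?_ (hnonneg i j)
    have hs := hsector (e i - e j) (by simpa using hediff i j)
    simpa using hs
  · -- Part 2
    set x : Fin N × Fin r → ℝ := fun p => e p.1 (Fin.castLE hr p.2) with hxdef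
    have hq : ∑ i, ∑ j, L i j * ∑ k : Fin n, υ k * e i k * e j k = x ⬝ᵥ (M *ᵥ x) := by
      rw [kron_quad_stmt12 L υ' x]
      apply Finset.sum_congr rfl; intro i _
      apply Finset.sum_congr rfl; intro j _
      rw [hmid i j]
    have hnorm : ∑ i, ∑ k : Fin r, (e i (Fin.castLE hr k))^2 = ∑ p, x p ^ 2 := by
      rw [Fintype.sum_prod_type]
    rw [hq, ge_iff_le, hnorm]
    -- spectral decomposition
    have hherm : M.IsHermitian := kron_herm_stmt12 L hLsym υ'
    have hMsymm : Mᵀ = M := by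
      have h := hherm
      rwa [Matrix.IsHermitian, conjTranspose_eq_transpose_of_trivial] at h
    set b := hherm.eigenvectorBasis with hbdef
    set μ := hherm.eigenvalues with hμdef
    have hinner : ∀ u v : EuclideanSpace ℝ (Fin N × Fin r),
        (inner ℝ u v : ℝ) = ∑ p, u p * v p := by
      intro u v
      simp [PiLp.inner_apply, RCLike.inner_apply, mul_comm]
    set X : EuclideanSpace ℝ (Fin N × Fin r) := WithLp.toLp 2 x with hXdef
    set MX : EuclideanSpace ℝ (Fin N × Fin r) := WithLp.toLp 2 (M *ᵥ x) with hMXdef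
    have hMb : ∀ idx, M *ᵥ ⇑(b idx) = μ idx • ⇑(b idx) := fun idx =>
      hherm.mulVec_eigenvectorBasis idx
    have hbM : ∀ idx, (inner ℝ (b idx) MX : ℝ) = μ idx * (inner ℝ (b idx) X : ℝ) := by
      intro idx
      rw [hinner, hinner]
      have h1 : ∑ p, (b idx) p * MX p = ⇑(b idx) ⬝ᵥ (M *ᵥ x) := rfl
      have h2 : ∑ p, (b idx) p * X p = ⇑(b idx) ⬝ᵥ x := rfl
      rw [h1, h2, Matrix.dotProduct_mulVec, ← Matrix.mulVec_transpose, hMsymm, hMb idx,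
        smul_dotProduct, smul_eq_mul]
    have hXMX : x ⬝ᵥ (M *ᵥ x) = ∑ idx, μ idx * (inner ℝ (b idx) X : ℝ)^2 := by
      have h0 : x ⬝ᵥ (M *ᵥ x) = (inner ℝ X MX : ℝ) := by
        rw [hinner]; rfl
      rw [h0, ← b.sum_inner_mul_inner X MX]
      apply Finset.sum_congr rfl; intro idx _
      rw [hbM idx, real_inner_comm X (b idx)]
      ring
    have hXX : ∑ p, x p ^ 2 = ∑ idx, (inner ℝ (b idx) X : ℝ)^2 := by
      have h0 : ∑ p, x p ^ 2 = (inner ℝ X X : ℝ) := by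
        rw [hinner]
        apply Finset.sum_congr rfl; intros; ring
      rw [h0, ← b.sum_inner_mul_inner X X]
      apply Finset.sum_congr rfl; intro idx _
      rw [real_inner_comm X (b idx)]
      ring
    have hzerocol : ∀ m : Fin n, ∑ i, e i m = 0 := by
      intro m
      have := congrFun hsum m
      simpa using this
    have hker : ∀ idx, μ idx = 0 → (inner ℝ (b idx) X : ℝ) = 0 := by
      intro idx h0
      have hbz : M *ᵥ ⇑(b idx) = 0 := by rw [hMb idx, h0, zero_smul]
      set v : Fin N × Fin r → ℝ := ⇑(b idx) with hv
      have h1 : ∑ i, ∑ j, L i j * ∑ k, υ' k * v (i, k) * v (j, k) = 0 := by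
        rw [← kron_quad_stmt12 L υ' v, ← hMdef, hbz, dotProduct_zero]
      have h2 := lap_quad_stmt12 a hsym L hL υ' (fun i k => v (i, k))
      have h4 : (1/2 : ℝ) * ∑ i, ∑ j, a i j * ∑ k, υ' k * (v (i, k) - v (j, k))^2 = 0 :=
        (h1.symm.trans h2).symm
      have h3 : ∑ i, ∑ j, a i j * ∑ k, υ' k * (v (i, k) - v (j, k))^2 = 0 := by linarith
      have hconst := ker_const_stmt12 a hnonneg G hadj hconn υ' hυ'pos
        (fun i k => v (i, k)) h3
      have hib : ∀ i j k, v (i, k) = v (j, k) := fun i j k => congrFun (hconst i j) k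
      have i₀ : Fin N := ⟨0, hN⟩
      rw [hinner]
      show ∑ p : Fin N × Fin r, v p * x p = 0
      rw [Fintype.sum_prod_type, Finset.sum_comm]
      apply Finset.sum_eq_zero
      intro k _
      have hcol : ∑ i, v (i, k) * x (i, k)
          = v (i₀, k) * ∑ i, e i (Fin.castLE hr k) := by
        rw [Finset.mul_sum]
        apply Finset.sum_congr rfl; intro i _
        rw [hib i i₀ k]
      rw [hcol, hzerocol, mul_zero]
    calc lam₂ * ∑ p, x p ^ 2 = ∑ idx, lam₂ * (inner ℝ (b idx) X : ℝ)^2 := by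
          rw [hXX, Finset.mul_sum]
      _ ≤ ∑ idx, μ idx * (inner ℝ (b idx) X : ℝ)^2 := by
          apply Finset.sum_le_sum
          intro idx _
          by_cases h : μ idx = 0
          · rw [hker idx h, h]; norm_num
          · have hbne : ⇑(b idx) ≠ (0 : Fin N × Fin r → ℝ) := by
              intro hh
              apply b.orthonormal.ne_zero idx
              ext p
              exact congrFun hh p
            have hle : lam₂ ≤ μ idx := hlam₂.2 ⟨h, ⇑(b idx), hbne, hMb idx⟩
            nlinarith [sq_nonneg ((inner ℝ (b idx) X : ℝ))]
      _ = x ⬝ᵥ (M *ᵥ x) := hXMX.symm
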